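/- Every geometric lattice of finite rank at least 2 whose cardinality is less than ℵ_ω has a matching. -/

import Mathlib

set_option linter.unusedSectionVars false
set_option linter.unusedVariables false


universe u

/-- An element of a poset is an *atom* (point) if it is an upper cover of a least element. -/
def IsAtomP {P : Type*} [PartialOrder P] (a : P) : Prop :=
  ∃ z : P, (∀ w, z ≤ w) ∧ z ⋖ a

/-- An element of a poset is a *coatom* (hyperplane) if it is a lower cover of a greatest
element. -/
def IsCoatomP {P : Type*} [PartialOrder P] (a : P) : Prop :=
  ∃ z : P, (∀ w, w ≤ z) ∧ a ⋖ z

/-- A partial order is a *geometric lattice of finite height* if it is a lattice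
(binary joins and meets exist), has no infinite chains, is semimodular, and every
element is a join (least upper bound) of a set of atoms. -/
def IsGeomLatFH (P : Type*) [PartialOrder P] : Prop :=
  (∀ x y : P, ∃ z, IsLUB {x, y} z) ∧
  (∀ x y : P, ∃ z, IsGLB {x, y} z) ∧
  (∀ c : Set P, IsChain (· ≤ ·) c → c.Finite) ∧
  (∀ a b c : P, a ⋖ b → a ⋖ c → b ≠ c → ∃ d, b ⋖ d ∧ c ⋖ d) ∧
  (∀ x : P, ∃ S : Set P, (∀ a ∈ S, IsAtomP a) ∧ IsLUB S x)

/-- `r` is the rank (height) function of a graded bounded poset: `r ⊥ = 0` and `r`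
increases by exactly one across covering pairs. -/
def IsRankFn {L : Type*} [PartialOrder L] [OrderBot L] (r : L → ℕ) : Prop :=
  r ⊥ = 0 ∧ ∀ x y : L, x ⋖ y → r y = r x + 1

/-- A *matching* of a lattice: an injection from atoms to coatoms (hyperplanes) such
that each atom lies below its image. -/
def HasMatching (L : Type*) [CompleteLattice L] : Prop :=
  ∃ f : {a : L // IsAtom a} → {h : L // IsCoatom h},
    Function.Injective f ∧ ∀ a : {a : L // IsAtom a}, (a : L) ≤ ((f a : {h : L // IsCoatom h}) : L)

section Geom

variable {L : Type u} [CompleteLattice L] {r : L → ℕ}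

/-- No infinite chains implies well-foundedness of `>`. -/
theorem GL.wfGT (hch : ∀ c : Set L, IsChain (· ≤ ·) c → c.Finite) :
    WellFounded ((· > ·) : L → L → Prop) := by
  rw [RelEmbedding.wellFounded_iff_isEmpty]
  constructor
  intro f
  have hmono : StrictMono f := fun a b h => f.map_rel_iff.2 h
  have : (Set.range f).Finite := hch _ (fun x hx y hy _ => by
    obtain ⟨a, rfl⟩ := hx; obtain ⟨b, rfl⟩ := hy
    rcases le_total a b with h | h
    · exact Or.inl (hmono.monotone h)
    · exact Or.inr (hmono.monotone h))
  exact Set.infinite_range_of_injective hmono.injective this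

theorem GL.wfLT (hch : ∀ c : Set L, IsChain (· ≤ ·) c → c.Finite) :
    WellFounded ((· < ·) : L → L → Prop) := by
  rw [RelEmbedding.wellFounded_iff_isEmpty]
  constructor
  intro f
  have hmono : StrictAnti f := fun a b h => f.map_rel_iff.2 h
  have : (Set.range f).Finite := hch _ (fun x hx y hy _ => by
    obtain ⟨a, rfl⟩ := hx; obtain ⟨b, rfl⟩ := hy
    rcases le_total a b with h | h
    · exact Or.inr (hmono.antitone h)
    · exact Or.inl (hmono.antitone h))
  exact Set.infinite_range_of_injective hmono.injective this

theorem GL.exists_maximal (hch : ∀ c : Set L, IsChain (· ≤ ·) c → c.Finite)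
    (s : Set L) (hs : s.Nonempty) : ∃ m ∈ s, ∀ x ∈ s, ¬ x > m := by
  obtain ⟨m, hm, hmax⟩ := (GL.wfGT hch).has_min s hs
  exact ⟨m, hm, fun x hx h => hmax x hx h⟩

theorem GL.exists_minimal (hch : ∀ c : Set L, IsChain (· ≤ ·) c → c.Finite)
    (s : Set L) (hs : s.Nonempty) : ∃ m ∈ s, ∀ x ∈ s, ¬ x < m := by
  obtain ⟨m, hm, hmax⟩ := (GL.wfLT hch).has_min s hs
  exact ⟨m, hm, fun x hx h => hmax x hx h⟩

theorem GL.exists_covBy (hch : ∀ c : Set L, IsChain (· ≤ ·) c → c.Finite)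
    {x y : L} (h : x < y) : ∃ z, x ⋖ z ∧ z ≤ y := by
  obtain ⟨z, ⟨hz1, hz2⟩, hmin⟩ := GL.exists_minimal hch {w | x < w ∧ w ≤ y} ⟨y, h, le_rfl⟩
  refine ⟨z, ⟨hz1, fun c hc1 hc2 => ?_⟩, hz2⟩
  exact hmin c ⟨hc1, hc2.le.trans hz2⟩ hc2

theorem GL.exists_covBy_le (hch : ∀ c : Set L, IsChain (· ≤ ·) c → c.Finite)
    {x y : L} (h : y < x) : ∃ z, y ≤ z ∧ z ⋖ x := by
  obtain ⟨z, ⟨hz1, hz2⟩, hmax⟩ := GL.exists_maximal hch {w | y ≤ w ∧ w < x} ⟨y, le_rfl, h⟩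
  refine ⟨z, hz1, hz2, fun c hc1 hc2 => ?_⟩
  exact hmax c ⟨hz1.trans hc1.le, hc2⟩ hc1

variable (hch : ∀ c : Set L, IsChain (· ≤ ·) c → c.Finite)
variable (hrc : ∀ x y : L, x ⋖ y → r y = r x + 1)

include hch hrc in
theorem GL.rank_lt_of_lt : ∀ {x y : L}, x < y → r x < r y := by
  have H : ∀ x : L, ∀ y, x < y → r x < r y := by
    intro x
    induction x using ((GL.wfGT hch).induction) with
    | _ x IH =>
      intro y hxy
      obtain ⟨z, hz, hzy⟩ := GL.exists_covBy hch hxy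
      rcases eq_or_lt_of_le hzy with rfl | hlt
      · rw [hrc _ _ hz]; omega
      · have h1 := hrc _ _ hz
        have h2 := IH z hz.lt y hlt
        omega
  exact fun {x y} h => H x y h

include hch hrc in
theorem GL.rank_le_of_le {x y : L} (h : x ≤ y) : r x ≤ r y := by
  rcases eq_or_lt_of_le h with rfl | h
  · exact le_rfl
  · exact (GL.rank_lt_of_lt hch hrc h).le

include hch hrc in
theorem GL.eq_of_le_rank {x y : L} (h : x ≤ y) (hr : r y ≤ r x) : x = y := by
  rcases eq_or_lt_of_le h with rfl | h
  · rfl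
  · exact absurd (GL.rank_lt_of_lt hch hrc h) (by omega)

include hch hrc in
theorem GL.covBy_of_rank {x y : L} (hxy : x < y) (h : r y = r x + 1) : x ⋖ y := by
  refine ⟨hxy, fun c hc1 hc2 => ?_⟩
  have := GL.rank_lt_of_lt hch hrc hc1
  have := GL.rank_lt_of_lt hch hrc hc2
  omega

include hch hrc in
theorem GL.rank_eq_zero_iff {x : L} (hr0 : r ⊥ = 0) : r x = 0 ↔ x = ⊥ := by
  constructor
  · intro h
    by_contra hne
    have : (⊥ : L) < x := bot_lt_iff_ne_bot.2 hne
    have := GL.rank_lt_of_lt hch hrc this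
    omega
  · rintro rfl; exact hr0

/-- Atomisticity: every element is the sup of the atoms (covers of `⊥`) below it. -/
theorem GL.sSup_atoms_eq (hat : ∀ x : L, ∃ S : Set L, (∀ a ∈ S, IsAtomP a) ∧ IsLUB S x)
    (x : L) : sSup {a | ⊥ ⋖ a ∧ a ≤ x} = x := by
  obtain ⟨S, hS, hlub⟩ := hat x
  have hx : sSup S = x := hlub.sSup_eq
  apply le_antisymm
  · exact sSup_le (fun a ha => ha.2)
  · have hsub : S ⊆ {a | ⊥ ⋖ a ∧ a ≤ x} := by
      intro a ha
      obtain ⟨z, hz, hcov⟩ := hS a ha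
      have hzb : z = ⊥ := le_antisymm (hz ⊥) bot_le
      exact ⟨hzb ▸ hcov, le_trans (le_sSup ha) hx.le⟩
    calc x = sSup S := hx.symm
    _ ≤ _ := sSup_le_sSup hsub

theorem GL.exists_atom_le_not_le
    (hat : ∀ x : L, ∃ S : Set L, (∀ a ∈ S, IsAtomP a) ∧ IsLUB S x)
    {x y : L} (h : ¬ x ≤ y) : ∃ a : L, ⊥ ⋖ a ∧ a ≤ x ∧ ¬ a ≤ y := by
  by_contra hc
  push_neg at hc
  apply h
  conv_lhs => rw [← GL.sSup_atoms_eq hat x]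
  exact sSup_le (fun a ha => hc a ha.1 ha.2)

variable (hsm : ∀ a b c : L, a ⋖ b → a ⋖ c → b ≠ c → ∃ d, b ⋖ d ∧ c ⋖ d)
variable (hat : ∀ x : L, ∃ S : Set L, (∀ a ∈ S, IsAtomP a) ∧ IsLUB S x)

include hch hrc hsm hat in
/-- The key covering lemma: joining an atom to any flat gives a cover. -/
theorem GL.covBy_sup_atom : ∀ {x a : L}, ⊥ ⋖ a → ¬ a ≤ x → x ⋖ x ⊔ a := by
  suffices H : ∀ n, ∀ x a : L, r x = n → ⊥ ⋖ a → ¬ a ≤ x → x ⋖ x ⊔ a by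
    intro x a ha hax; exact H (r x) x a rfl ha hax
  intro n
  induction n using Nat.strong_induction_on with
  | _ n IH =>
    intro x a hrx ha hax
    rcases eq_or_ne x ⊥ with rfl | hxb
    · simpa [bot_sup_eq] using ha
    · -- pick z ⋖ x
      obtain ⟨z, hz1, hz2⟩ := GL.exists_covBy_le hch (bot_lt_iff_ne_bot.2 hxb)
      obtain ⟨c, hc, hcx, hcz⟩ := GL.exists_atom_le_not_le hat (not_le_of_gt hz2.lt)
      have hxzc : x = z ⊔ c := by
        have h1 : z < z ⊔ c := lt_of_le_of_ne le_sup_left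
          (fun h => hcz (h ▸ le_sup_right))
        have h2 : z ⊔ c ≤ x := sup_le hz2.le hcx
        rcases lt_or_eq_of_le h2 with h | h
        · exact absurd h (hz2.2 h1)
        · exact h.symm
      have haz : ¬ a ≤ z := fun h => hax (h.trans hz2.le)
      have hIH : z ⋖ z ⊔ a := by
        have hrz : r x = r z + 1 := hrc _ _ hz2
        exact IH (r z) (by omega) z a rfl ha haz
      rcases eq_or_ne x (z ⊔ a) with he | hne
      · exact absurd (he ▸ le_sup_right) hax
      · obtain ⟨d, hd1, hd2⟩ := hsm z x (z ⊔ a) hz2 hIH hne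
        have hle : x ⊔ a ≤ d := sup_le hd1.le (le_sup_right.trans hd2.le)
        have hlt : x < x ⊔ a := lt_of_le_of_ne le_sup_left
          (fun h => hax (h ▸ le_sup_right))
        have : x ⊔ a = d := by
          rcases lt_or_eq_of_le hle with h | h
          · exact absurd h (hd1.2 hlt)
          · exact h
        exact this ▸ hd1
omit hch in
include hch in
theorem GL.atom_decomp (hat : ∀ x : L, ∃ S : Set L, (∀ a ∈ S, IsAtomP a) ∧ IsLUB S x)
    {u c : L} (hc : u ⋖ c) : ∃ d, ⊥ ⋖ d ∧ d ≤ c ∧ ¬ d ≤ u ∧ u ⊔ d = c := by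
  obtain ⟨d, hd, hdc, hdu⟩ := GL.exists_atom_le_not_le hat (not_le_of_gt hc.lt)
  refine ⟨d, hd, hdc, hdu, ?_⟩
  have h1 : u < u ⊔ d := lt_of_le_of_ne le_sup_left (fun h => hdu (h ▸ le_sup_right))
  have h2 : u ⊔ d ≤ c := sup_le hc.le hdc
  rcases lt_or_eq_of_le h2 with h | h
  · exact absurd h (hc.2 h1)
  · exact h

include hch hrc hsm hat in
theorem GL.rel_covBy_sup {u c x : L} (hc : u ⋖ c) (hux : u ≤ x) (hcx : ¬ c ≤ x) :
    x ⋖ x ⊔ c := by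
  obtain ⟨d, hd, hdc, hdu, hudc⟩ := GL.atom_decomp hch hat hc
  have hdx : ¬ d ≤ x := fun h => hcx (hudc ▸ sup_le hux h)
  have := GL.covBy_sup_atom hch hrc hsm hat hd hdx
  have he : x ⊔ c = x ⊔ d := by
    rw [← hudc, ← sup_assoc, sup_eq_left.2 hux]
  rwa [he]

include hch hrc hsm hat in
theorem GL.rel_sSup_eq {u x : L} (hux : u ≤ x) :
    u ⊔ sSup {c | u ⋖ c ∧ c ≤ x} = x := by
  apply le_antisymm
  · exact sup_le hux (sSup_le (fun c hc => hc.2))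
  · conv_lhs => rw [← GL.sSup_atoms_eq hat x]
    apply sSup_le
    intro a ⟨ha, hax⟩
    by_cases hau : a ≤ u
    · exact le_sup_of_le_left hau
    · have hcov : u ⋖ u ⊔ a := GL.covBy_sup_atom hch hrc hsm hat ha hau
      have : u ⊔ a ∈ {c | u ⋖ c ∧ c ≤ x} := ⟨hcov, sup_le hux hax⟩
      exact le_trans le_sup_right (le_sup_of_le_right (le_sSup this))

include hch hrc hsm hat in
theorem GL.rel_L2 {u v x c : L} (hux : u ≤ x) (hxv : x ≤ v) (hc : u ⋖ c) (hcv : c ≤ v)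
    (hcx : ¬ c ≤ x) : ∃ h, x ≤ h ∧ h ⋖ v ∧ ¬ c ≤ h := by
  obtain ⟨y, ⟨hy1, hy2, hy3⟩, hymax⟩ := GL.exists_maximal hch
    {w | x ≤ w ∧ w ≤ v ∧ ¬ c ≤ w} ⟨x, le_rfl, hxv, hcx⟩
  refine ⟨y, hy1, ?_, hy3⟩
  have hcy : y ⋖ y ⊔ c := GL.rel_covBy_sup hch hrc hsm hat hc (hux.trans hy1) hy3
  have hvyc : v = y ⊔ c := by
    apply le_antisymm _ (sup_le hy2 hcv)
    conv_lhs => rw [← GL.rel_sSup_eq hch hrc hsm hat hy2]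
    apply sup_le le_sup_left
    apply sSup_le
    intro d ⟨hd, hdv⟩
    have hcd : c ≤ d := by
      by_contra hcd
      exact hymax d ⟨hy1.trans hd.le, hdv, hcd⟩ hd.lt
    have : y ⊔ c = d := by
      have h1 : y < y ⊔ c := hcy.lt
      have h2 : y ⊔ c ≤ d := sup_le hd.le hcd
      rcases lt_or_eq_of_le h2 with h | h
      · exact absurd h (hd.2 h1)
      · exact h
    exact le_of_eq this.symm
  rw [hvyc]; exact hcy

include hch hrc hsm hat in
theorem GL.rel_coatom_above {u v x : L} (hux : u ≤ x) (hxv : x < v) :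
    ∃ h, x ≤ h ∧ h ⋖ v := by
  have huv : u ≤ v := hux.trans hxv.le
  have : ¬ ∀ c, u ⋖ c → c ≤ v → c ≤ x := by
    intro hall
    have := GL.rel_sSup_eq hch hrc hsm hat huv
    have : v ≤ x := by
      rw [← this]
      exact sup_le hux (sSup_le (fun c hc => hall c hc.1 hc.2))
    exact absurd this (not_le_of_gt hxv)
  push_neg at this
  obtain ⟨c, hc, hcv, hcx⟩ := this
  obtain ⟨h, h1, h2, _⟩ := GL.rel_L2 hch hrc hsm hat hux hxv.le hc hcv hcx
  exact ⟨h, h1, h2⟩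

end Geom

section Tools

open Cardinal

theorem GL.regular_of_lt_aleph_omega {κ : Cardinal.{u}} (h1 : ℵ₀ ≤ κ)
    (h2 : κ < Cardinal.aleph Ordinal.omega0) : κ.IsRegular := by
  obtain ⟨o, rfl⟩ := Cardinal.mem_range_aleph_iff.2 h1
  have ho : o < Ordinal.omega0 := Cardinal.aleph_lt_aleph.1 h2
  obtain ⟨n, rfl⟩ := Ordinal.lt_omega0.1 ho
  cases n with
  | zero => simpa using Cardinal.isRegular_aleph0
  | succ m =>
      have h : ((m + 1 : ℕ) : Ordinal) = Order.succ (m : Ordinal) := by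
        rw [Nat.cast_add_one, Ordinal.add_one_eq_succ]
      rw [h]
      exact Cardinal.isRegular_aleph_succ _

/-- Transfinite greedy matching: if every element of `A` has at least `#A` neighbours,
then there is an injective choice of neighbours. -/
theorem GL.greedy {α β : Type u} (A : Set α) (N : α → Set β)
    (hκ : ∀ a : A, Cardinal.mk A ≤ Cardinal.mk (N a.1)) :
    ∃ f : A → β, Function.Injective f ∧ ∀ a : A, f a ∈ N a.1 := by
  classical
  obtain ⟨e⟩ : Nonempty ((Cardinal.mk A).ord.ToType ≃ A) :=
    Cardinal.eq.1 (Cardinal.mk_ord_toType _)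
  have wf : WellFounded ((· < ·) : (Cardinal.mk A).ord.ToType → _ → Prop) :=
    IsWellFounded.wf
  have key : ∀ (x : (Cardinal.mk A).ord.ToType) (ih : ∀ y, y < x → β),
      (N (e x).1 \ Set.range (fun p : Set.Iio x => ih p.1 p.2)).Nonempty := by
    intro x ih
    rw [Set.nonempty_iff_ne_empty]
    intro hemp
    have hsub : N (e x).1 ⊆ Set.range (fun p : Set.Iio x => ih p.1 p.2) := by
      intro b hb
      by_contra hnb
      exact (Set.eq_empty_iff_forall_notMem.1 hemp b) ⟨hb, hnb⟩
    have h1 := Cardinal.mk_le_mk_of_subset hsub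
    have h2 : Cardinal.mk (Set.range (fun p : Set.Iio x => ih p.1 p.2)) ≤
        Cardinal.mk (Set.Iio x) := Cardinal.mk_range_le
    have h3 : Cardinal.mk (Set.Iio x) < Cardinal.mk A := Cardinal.mk_Iio_ord_toType x
    exact absurd (((hκ (e x)).trans h1).trans h2) (not_le_of_gt h3)
  let g : (Cardinal.mk A).ord.ToType → β := wf.fix (fun x ih => (key x ih).some)
  have gdef : ∀ x, g x = (key x (fun y _ => g y)).some := fun x =>
    wf.fix_eq (fun x ih => (key x ih).some) x
  have gmem : ∀ x, g x ∈ N (e x).1 \ Set.range (fun p : Set.Iio x => g p.1) := by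
    intro x
    rw [gdef x]
    exact (key x (fun y _ => g y)).some_mem
  have ginj : Function.Injective g := by
    intro x y hxy
    by_contra hne
    rcases lt_or_gt_of_ne hne with h | h
    · exact (gmem y).2 ⟨⟨x, h⟩, hxy⟩
    · exact (gmem x).2 ⟨⟨y, h⟩, hxy.symm⟩
  refine ⟨fun a => g (e.symm a), fun a b hab => ?_, fun a => ?_⟩
  · have := ginj hab
    have := congrArg e this
    simpa using this
  · have := (gmem (e.symm a)).1
    simpa using this

end Tools


section Main

variable {L : Type u} [CompleteLattice L] {r : L → ℕ}

/-- Interval atoms: covers of `u` below `v`. -/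
def GL.RA (u v : L) : Set L := {a | u ⋖ a ∧ a ≤ v}

/-- Interval coatoms: lower covers of `v` above `u`. -/
def GL.RH (u v : L) : Set L := {h | u ≤ h ∧ h ⋖ v}

/-- A matching of the interval `[u,v]`. -/
def GL.RMatch (u v : L) : Prop :=
  ∃ f : GL.RA u v → GL.RH u v, Function.Injective f ∧ ∀ a : GL.RA u v, (a : L) ≤ (f a : L)

/-- Interval coatoms above a given interval atom. -/
def GL.NH (u v a : L) : Set L := {h | h ∈ GL.RH u v ∧ a ≤ h}

theorem GL.mem_RA {u v a : L} : a ∈ GL.RA u v ↔ u ⋖ a ∧ a ≤ v := Iff.rfl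
theorem GL.mem_RH {u v h : L} : h ∈ GL.RH u v ↔ u ≤ h ∧ h ⋖ v := Iff.rfl

theorem GL.RA_not_le {u v a b : L} (ha : a ∈ GL.RA u v) (hb : b ∈ GL.RA u v)
    (hne : a ≠ b) : ¬ a ≤ b := by
  intro h
  rcases lt_or_eq_of_le h with h | h
  · exact hb.1.2 ha.1.lt h
  · exact hne h

theorem GL.NH_eq_RH {u v a : L} (ha : a ∈ GL.RA u v) : GL.NH u v a = GL.RH a v := by
  ext h
  constructor
  · rintro ⟨⟨h1, h2⟩, h3⟩; exact ⟨h3, h2⟩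
  · rintro ⟨h1, h2⟩; exact ⟨⟨ha.1.le.trans h1, h2⟩, h1⟩

variable (hch : ∀ c : Set L, IsChain (· ≤ ·) c → c.Finite)
variable (hrc : ∀ x y : L, x ⋖ y → r y = r x + 1)
variable (hsm : ∀ a b c : L, a ⋖ b → a ⋖ c → b ≠ c → ∃ d, b ⋖ d ∧ c ⋖ d)
variable (hat : ∀ x : L, ∃ S : Set L, (∀ a ∈ S, IsAtomP a) ∧ IsLUB S x)

include hch hrc in
theorem GL.rank_RA {u v a : L} (ha : a ∈ GL.RA u v) : r a = r u + 1 := hrc _ _ ha.1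

include hch hrc hsm hat in
/-- the join of two distinct interval atoms is an interval line. -/
theorem GL.line_rank {u v a b : L} (ha : a ∈ GL.RA u v) (hb : b ∈ GL.RA u v)
    (hne : a ≠ b) : r (a ⊔ b) = r u + 2 := by
  have h1 : a ⋖ a ⊔ b := GL.rel_covBy_sup hch hrc hsm hat hb.1 ha.1.le
    (GL.RA_not_le hb ha (Ne.symm hne))
  rw [hrc _ _ h1, GL.rank_RA hch hrc ha]

include hch hrc hsm hat in
theorem GL.line_eq {u v a b ℓ : L} (ha : a ∈ GL.RA u v) (hb : b ∈ GL.RA u v) (hne : a ≠ b)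
    (hrℓ : r ℓ = r u + 2) (haℓ : a ≤ ℓ) (hbℓ : b ≤ ℓ) : a ⊔ b = ℓ := by
  apply GL.eq_of_le_rank hch hrc (sup_le haℓ hbℓ)
  rw [hrℓ, GL.line_rank hch hrc hsm hat ha hb hne]

include hch hrc in
theorem GL.base2 {u v : L} (huv : u ≤ v) (hn : r v = r u + 2) : GL.RMatch u v := by
  have key : ∀ a : GL.RA u v, a.1 ∈ GL.RH u v := by
    intro a
    have h1 : r a.1 = r u + 1 := hrc _ _ a.2.1
    exact ⟨a.2.1.le, GL.covBy_of_rank hch hrc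
      (lt_of_le_of_ne a.2.2 (fun h => by rw [h] at h1; omega)) (by omega)⟩
  exact ⟨fun a => ⟨a.1, key a⟩, fun a b hab => by apply Subtype.ext; have h2 := congrArg Subtype.val hab; simpa using h2,
    fun a => le_rfl⟩

/-- Transversal hyperplanes to the line `ℓ` at the point `q`. -/
def GL.T (u v ℓ q : L) : Set L := {h | h ∈ GL.RH u v ∧ h ⊓ ℓ = q}

include hch hrc in
theorem GL.meet_line {u ℓ q h : L} (hq : q ∈ GL.RA u ℓ) (hrℓ : r ℓ = r u + 2)
    (hqh : q ≤ h) (hℓh : ¬ ℓ ≤ h) : h ⊓ ℓ = q := by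
  have h1 : q ≤ h ⊓ ℓ := le_inf hqh hq.2
  have h2 : h ⊓ ℓ < ℓ := lt_of_le_of_ne inf_le_right (fun he => hℓh (he ▸ inf_le_left))
  have h3 : r (h ⊓ ℓ) < r u + 2 := hrℓ ▸ GL.rank_lt_of_lt hch hrc h2
  have h4 : r q = r u + 1 := hrc _ _ hq.1
  exact (GL.eq_of_le_rank hch hrc h1 (by omega)).symm

include hch hrc hsm hat in
theorem GL.T_nonempty {u v ℓ q q' : L} (hℓv : ℓ ≤ v) (hrℓ : r ℓ = r u + 2)
    (hq : q ∈ GL.RA u ℓ) (hq' : q' ∈ GL.RA u ℓ) (hne : q' ≠ q) :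
    ∃ h, h ∈ GL.T u v ℓ q ∧ ¬ ℓ ≤ h := by
  have hqK : q ∈ GL.RA u v := ⟨hq.1, hq.2.trans hℓv⟩
  have hq'K : q' ∈ GL.RA u v := ⟨hq'.1, hq'.2.trans hℓv⟩
  have hq'q : ¬ q' ≤ q := GL.RA_not_le hq'K hqK hne
  obtain ⟨h, hh1, hh2, hh3⟩ := GL.rel_L2 hch hrc hsm hat hq.1.le (hq.2.trans hℓv)
    hq'.1 (hq'.2.trans hℓv) hq'q
  have hℓh : ¬ ℓ ≤ h := fun hc => hh3 (hq'.2.trans hc)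
  exact ⟨h, ⟨⟨hq.1.le.trans hh1, hh2⟩, GL.meet_line hch hrc hq hrℓ hh1 hℓh⟩, hℓh⟩

include hch hrc hsm hat in
/-- A transversal hyperplane at `q` through a point `b` off the line. -/
theorem GL.T_through {u v ℓ q q'' b : L} (hℓv : ℓ ≤ v) (hrℓ : r ℓ = r u + 2)
    (hq : q ∈ GL.RA u ℓ) (hq'' : q'' ∈ GL.RA u ℓ) (hne : q'' ≠ q)
    (hb : b ∈ GL.RA u v) (hbℓ : ¬ b ≤ ℓ) :
    ∃ h, h ∈ GL.T u v ℓ q ∧ b ≤ h := by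
  have hqK : q ∈ GL.RA u v := ⟨hq.1, hq.2.trans hℓv⟩
  have hq''K : q'' ∈ GL.RA u v := ⟨hq''.1, hq''.2.trans hℓv⟩
  have hbq : b ≠ q := fun h => hbℓ (h ▸ hq.2)
  -- q'' is not below b ⊔ q
  have hq''bq : ¬ q'' ≤ b ⊔ q := by
    intro hc
    have hℓeq : q ⊔ q'' = ℓ := GL.line_eq hch hrc hsm hat hqK hq''K (Ne.symm hne)
      hrℓ hq.2 hq''.2
    have h1 : ℓ ≤ b ⊔ q := hℓeq ▸ sup_le (le_sup_right.trans le_rfl) hc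
    -- then ℓ = b ⊔ q since ranks agree
    have h2 : r (b ⊔ q) = r u + 2 := GL.line_rank hch hrc hsm hat hb hqK hbq
    have := GL.eq_of_le_rank hch hrc h1 (by omega)
    exact hbℓ (this ▸ le_sup_left)
  have hubq : u ≤ b ⊔ q := hb.1.le.trans le_sup_left
  have hbqv : b ⊔ q ≤ v := sup_le hb.2 (hq.2.trans hℓv)
  obtain ⟨h, hh1, hh2, hh3⟩ := GL.rel_L2 hch hrc hsm hat hubq hbqv hq''.1
    (hq''.2.trans hℓv) hq''bq
  have hℓh : ¬ ℓ ≤ h := fun hc => hh3 (hq''.2.trans hc)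
  refine ⟨h, ⟨⟨hubq.trans hh1, hh2⟩, GL.meet_line hch hrc hq hrℓ (le_sup_right.trans hh1) hℓh⟩,
    le_sup_left.trans hh1⟩

include hch hrc hsm hat in
theorem GL.rank_sup_le {u x q : L} (hq : u ⋖ q) (hux : u ≤ x) :
    r (x ⊔ q) ≤ r x + 1 := by
  by_cases hqx : q ≤ x
  · rw [sup_eq_left.2 hqx]; omega
  · have := GL.rel_covBy_sup hch hrc hsm hat hq hux hqx
    rw [hrc _ _ this]

include hch hrc hsm hat in
theorem GL.count_NH {n : ℕ} {u v c : L} (hn : 3 ≤ n) (hrv : r v = r u + n)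
    (IH : ∀ m, 2 ≤ m → m < n → ∀ u' v' : L, u' ≤ v' → r v' = r u' + m → GL.RMatch u' v')
    (hc : c ∈ GL.RA u v) : Cardinal.mk (GL.RA c v) ≤ Cardinal.mk (GL.NH u v c) := by
  have h0 : r c = r u + 1 := GL.rank_RA hch hrc hc
  have h1 : r v = r c + (n - 1) := by omega
  obtain ⟨f, hf, _⟩ := IH (n - 1) (by omega) (by omega) c v hc.2 h1
  rw [GL.NH_eq_RH hc]
  exact Cardinal.mk_le_of_injective hf

include hch hrc hsm hat in
theorem GL.off_line_deg {n : ℕ} {u v ℓ c : L} (hn : 3 ≤ n) (hrv : r v = r u + n)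
    (IH : ∀ m, 2 ≤ m → m < n → ∀ u' v' : L, u' ≤ v' → r v' = r u' + m → GL.RMatch u' v')
    (hℓv : ℓ ≤ v) (hrℓ : r ℓ = r u + 2)
    (hc : c ∈ GL.RA u v) (hcℓ : ¬ c ≤ ℓ) :
    Cardinal.mk (GL.RA u ℓ) ≤ Cardinal.mk (GL.NH u v c) := by
  have hmap : ∀ q : GL.RA u ℓ, c ⊔ q.1 ∈ GL.RA c v := by
    intro q
    have hqK : q.1 ∈ GL.RA u v := ⟨q.2.1, q.2.2.trans hℓv⟩
    have hqc : ¬ q.1 ≤ c := GL.RA_not_le hqK hc (fun h => hcℓ (h ▸ q.2.2))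
    exact ⟨GL.rel_covBy_sup hch hrc hsm hat q.2.1 hc.1.le hqc, sup_le hc.2 hqK.2⟩
  have hinj : Function.Injective (fun q : GL.RA u ℓ => (⟨c ⊔ q.1, hmap q⟩ : GL.RA c v)) := by
    rintro ⟨qv, hqm⟩ ⟨q'v, hq'm⟩ heq
    have heq' : c ⊔ qv = c ⊔ q'v := congrArg Subtype.val heq
    apply Subtype.ext
    show qv = q'v
    by_contra hne'
    have hqK : qv ∈ GL.RA u v := ⟨hqm.1, hqm.2.trans hℓv⟩
    have hq'K : q'v ∈ GL.RA u v := ⟨hq'm.1, hq'm.2.trans hℓv⟩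
    have hℓeq : qv ⊔ q'v = ℓ := GL.line_eq hch hrc hsm hat hqK hq'K hne'
      hrℓ hqm.2 hq'm.2
    have h1 : ℓ ≤ c ⊔ qv := by
      rw [← hℓeq]
      exact sup_le le_sup_right (by rw [heq']; exact le_sup_right)
    have h2 : r (c ⊔ qv) = r u + 2 := by
      have h3 := GL.rank_RA hch hrc hc
      rw [hrc _ _ (hmap ⟨qv, hqm⟩).1]; omega
    have h4 := GL.eq_of_le_rank hch hrc h1 (by omega)
    exact hcℓ (h4 ▸ le_sup_left)
  exact le_trans (Cardinal.mk_le_of_injective hinj)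
    (GL.count_NH hch hrc hsm hat hn hrv IH hc)

include hch hrc hsm hat in
theorem GL.exists_big_line {n : ℕ} {u v a0 : L} (hn : 3 ≤ n) (hrv : r v = r u + n)
    (IH : ∀ m, 2 ≤ m → m < n → ∀ u' v' : L, u' ≤ v' → r v' = r u' + m → GL.RMatch u' v')
    (hreg : (Cardinal.mk (GL.RA u v)).IsRegular)
    (ha0 : a0 ∈ GL.RA u v)
    (hsmall : Cardinal.mk (GL.NH u v a0) < Cardinal.mk (GL.RA u v)) :
    ∃ ℓ, ℓ ≤ v ∧ r ℓ = r u + 2 ∧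
      Cardinal.mk (GL.RA u v) ≤ Cardinal.mk (GL.RA u ℓ) := by
  classical
  set κ := Cardinal.mk (GL.RA u v) with hκ
  have hP : Cardinal.mk (GL.RA a0 v) < κ :=
    lt_of_le_of_lt (GL.count_NH hch hrc hsm hat hn hrv IH ha0) hsmall
  by_contra hno
  push_neg at hno
  have hcover : GL.RA u v ⊆ insert a0 (⋃ p : GL.RA a0 v, GL.RA u p.1) := by
    intro a ha
    by_cases haa : a = a0
    · exact haa ▸ Set.mem_insert _ _
    · have hana : ¬ a ≤ a0 := GL.RA_not_le ha ha0 haa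
      have hp : a0 ⊔ a ∈ GL.RA a0 v :=
        ⟨GL.rel_covBy_sup hch hrc hsm hat ha.1 ha0.1.le hana, sup_le ha0.2 ha.2⟩
      refine Set.mem_insert_of_mem _ (Set.mem_iUnion.2 ⟨⟨a0 ⊔ a, hp⟩, ha.1, le_sup_right⟩)
  have hsum : Cardinal.sum (fun p : GL.RA a0 v => Cardinal.mk (GL.RA u p.1)) < κ := by
    apply Cardinal.sum_lt_of_isRegular hreg hP
    intro p
    have hup : u ≤ p.1 := ha0.1.le.trans p.2.1.le
    have hrp : r p.1 = r u + 2 := by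
      have h1 : r p.1 = r a0 + 1 := hrc _ _ p.2.1
      have h2 : r a0 = r u + 1 := GL.rank_RA hch hrc ha0
      omega
    exact hno p.1 p.2.2 hrp
  have h1 : κ ≤ Cardinal.mk (⋃ p : GL.RA a0 v, GL.RA u p.1) + 1 :=
    le_trans (Cardinal.mk_le_mk_of_subset hcover) (Cardinal.mk_insert_le)
  have h2 : Cardinal.mk (⋃ p : GL.RA a0 v, GL.RA u p.1) < κ :=
    lt_of_le_of_lt Cardinal.mk_iUnion_le_sum_mk hsum
  have h3 : Cardinal.mk (⋃ p : GL.RA a0 v, GL.RA u p.1) + 1 < κ :=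
    Cardinal.add_lt_of_lt hreg.aleph0_le h2
      (lt_of_lt_of_le Cardinal.one_lt_aleph0 hreg.aleph0_le)
  exact absurd (lt_of_le_of_lt h1 h3) (lt_irrefl κ)

include hch hrc hsm hat in
/-- The case where at most one point of the big line has a unique transversal. -/
theorem GL.sing_le_one_case {u v ℓ : L} (hℓv : ℓ ≤ v) (hrℓ : r ℓ = r u + 2)
    (hAinf : (GL.RA u ℓ).Infinite)
    (hO : Cardinal.mk {c | c ∈ GL.RA u v ∧ ¬ c ≤ ℓ} ≤
      Cardinal.mk ((GL.RA u ℓ) \ {q : L | (GL.T u v ℓ q).Subsingleton} : Set L)) :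
    GL.RMatch u v := by
  classical
  obtain ⟨σ⟩ := Cardinal.le_def _ _ |>.1 hO
  -- for each off-line point b, a transversal hyperplane through b at σ b
  have hbex : ∀ b : {c | c ∈ GL.RA u v ∧ ¬ c ≤ ℓ},
      ∃ h, h ∈ GL.T u v ℓ (σ b).1 ∧ b.1 ≤ h := by
    intro b
    obtain ⟨q'', hq''m, hq''ne⟩ :
        ∃ q'', q'' ∈ GL.RA u ℓ ∧ q'' ≠ (σ b).1 := by
      obtain ⟨q'', h1, h2⟩ := hAinf.exists_notMem_finite (Set.finite_singleton (σ b).1)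
      exact ⟨q'', h1, by simpa using h2⟩
    exact GL.T_through hch hrc hsm hat hℓv hrℓ (σ b).2.1 hq''m hq''ne b.2.1 b.2.2
  choose hb hbT hble using hbex
  -- for each point q of the line, a transversal avoiding the committed ones
  have hqex : ∀ q : GL.RA u ℓ, ∃ h, h ∈ GL.T u v ℓ q.1 ∧
      ∀ b, (σ b).1 = q.1 → h ≠ hb b := by
    intro q
    by_cases hr : ∃ b, (σ b).1 = q.1
    · obtain ⟨b0, hb0⟩ := hr
      have hnotsing : ¬ (GL.T u v ℓ q.1).Subsingleton := by
        have h1 := (σ b0).2.2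
        rw [hb0] at h1; exact h1
      rw [Set.not_subsingleton_iff] at hnotsing
      obtain ⟨h₁, hh₁, h₂, hh₂, hne12⟩ := hnotsing
      have huniq : ∀ b, (σ b).1 = q.1 → b = b0 := by
        intro b hbq
        apply σ.injective
        exact Subtype.ext (hbq.trans hb0.symm)
      by_cases hc : h₁ = hb b0
      · exact ⟨h₂, hh₂, fun b hbq => by rw [huniq b hbq, ← hc]; exact (Ne.symm hne12)⟩
      · exact ⟨h₁, hh₁, fun b hbq => by rw [huniq b hbq]; exact hc⟩
    · obtain ⟨q'', hq''m, hq''ne⟩ :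
          ∃ q'', q'' ∈ GL.RA u ℓ ∧ q'' ≠ q.1 := by
        obtain ⟨q'', h1, h2⟩ := hAinf.exists_notMem_finite (Set.finite_singleton q.1)
        exact ⟨q'', h1, by simpa using h2⟩
      obtain ⟨h, hh, _⟩ := GL.T_nonempty hch hrc hsm hat hℓv hrℓ q.2 hq''m hq''ne
      exact ⟨h, hh, fun b hbq => absurd ⟨b, hbq⟩ hr⟩
  choose tq htqT htqne using hqex
  refine ⟨fun a => if haℓ : a.1 ≤ ℓ then ⟨tq ⟨a.1, a.2.1, haℓ⟩, (htqT _).1⟩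
    else ⟨hb ⟨a.1, a.2, haℓ⟩, (hbT _).1⟩, ?_, ?_⟩
  · intro a a' heq
    have hv := congrArg Subtype.val heq
    beta_reduce at hv
    rw [apply_dite Subtype.val, apply_dite Subtype.val] at hv
    by_cases haℓ : a.1 ≤ ℓ <;> by_cases ha'ℓ : a'.1 ≤ ℓ <;>
      [rw [dif_pos haℓ, dif_pos ha'ℓ] at hv;
       rw [dif_pos haℓ, dif_neg ha'ℓ] at hv;
       rw [dif_neg haℓ, dif_pos ha'ℓ] at hv;
       rw [dif_neg haℓ, dif_neg ha'ℓ] at hv] <;> dsimp only at hv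
    · -- both on the line
      have h1 := (htqT ⟨a.1, a.2.1, haℓ⟩).2
      have h2 := (htqT ⟨a'.1, a'.2.1, ha'ℓ⟩).2
      apply Subtype.ext
      rw [← h1, ← h2, hv]
    · -- a on the line, a' off
      have h1 := (htqT ⟨a.1, a.2.1, haℓ⟩).2
      have h2 := (hbT ⟨a'.1, a'.2, ha'ℓ⟩).2
      have hclass : (σ ⟨a'.1, a'.2, ha'ℓ⟩).1 = a.1 := by
        rw [← h1, ← h2, hv]
      exact absurd hv (htqne ⟨a.1, a.2.1, haℓ⟩ _ hclass)
    · -- a off the line, a' on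
      have h1 := (htqT ⟨a'.1, a'.2.1, ha'ℓ⟩).2
      have h2 := (hbT ⟨a.1, a.2, haℓ⟩).2
      have hclass : (σ ⟨a.1, a.2, haℓ⟩).1 = a'.1 := by
        rw [← h1, ← h2, hv]
      exact absurd hv.symm (htqne ⟨a'.1, a'.2.1, ha'ℓ⟩ _ hclass)
    · -- both off the line
      have h1 := (hbT ⟨a.1, a.2, haℓ⟩).2
      have h2 := (hbT ⟨a'.1, a'.2, ha'ℓ⟩).2
      have hclass : (σ ⟨a.1, a.2, haℓ⟩).1 = (σ ⟨a'.1, a'.2, ha'ℓ⟩).1 := by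
        rw [← h1, ← h2, hv]
      have hbb : (⟨a.1, a.2, haℓ⟩ : {c | c ∈ GL.RA u v ∧ ¬ c ≤ ℓ}) = ⟨a'.1, a'.2, ha'ℓ⟩ :=
        σ.injective (Subtype.ext hclass)
      apply Subtype.ext
      have h5 := congrArg Subtype.val hbb
      exact h5
  · intro a
    dsimp only
    split_ifs with haℓ
    · have h1 := (htqT ⟨a.1, a.2.1, haℓ⟩).2
      calc (a : L) = tq ⟨a.1, a.2.1, haℓ⟩ ⊓ ℓ := h1.symm
        _ ≤ _ := inf_le_left
    · exact hble ⟨a.1, a.2, haℓ⟩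

include hch hrc hsm hat in
/-- The decomposition case: two points of the line with unique transversals. -/
theorem GL.sing_ge_two_case {n : ℕ} {u v ℓ q1 q2 : L} (hn : 3 ≤ n)
    (IH : ∀ m, 2 ≤ m → m < n → ∀ u' v' : L, u' ≤ v' → r v' = r u' + m → GL.RMatch u' v')
    (huv : u ≤ v) (hrv : r v = r u + n)
    (hℓv : ℓ ≤ v) (hrℓ : r ℓ = r u + 2)
    (hq1 : q1 ∈ GL.RA u ℓ) (hq2 : q2 ∈ GL.RA u ℓ) (hne : q1 ≠ q2)
    (hs1 : (GL.T u v ℓ q1).Subsingleton) (hs2 : (GL.T u v ℓ q2).Subsingleton) :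
    GL.RMatch u v := by
  classical
  have hq1K : q1 ∈ GL.RA u v := ⟨hq1.1, hq1.2.trans hℓv⟩
  have hq2K : q2 ∈ GL.RA u v := ⟨hq2.1, hq2.2.trans hℓv⟩
  obtain ⟨h1, hh1, -⟩ := GL.T_nonempty hch hrc hsm hat hℓv hrℓ hq1 hq2 (Ne.symm hne)
  obtain ⟨h2, hh2, -⟩ := GL.T_nonempty hch hrc hsm hat hℓv hrℓ hq2 hq1 hne
  -- every off-line point lies below both h1 and h2
  have hoff : ∀ c ∈ GL.RA u v, ¬ c ≤ ℓ → c ≤ h1 ⊓ h2 := by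
    intro c hc hcl
    obtain ⟨g1, hg1, hcg1⟩ := GL.T_through hch hrc hsm hat hℓv hrℓ hq1 hq2
      (Ne.symm hne) hc hcl
    obtain ⟨g2, hg2, hcg2⟩ := GL.T_through hch hrc hsm hat hℓv hrℓ hq2 hq1 hne hc hcl
    have e1 : g1 = h1 := hs1 hg1 hh1
    have e2 : g2 = h2 := hs2 hg2 hh2
    exact le_inf (e1 ▸ hcg1) (e2 ▸ hcg2)
  set F := h1 ⊓ h2 with hF
  have hq1h2 : ¬ q1 ≤ h2 := by
    intro hle
    have h5 : q1 ≤ h2 ⊓ ℓ := le_inf hle hq1.2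
    rw [hh2.2] at h5
    exact (GL.RA_not_le hq1K hq2K hne) h5
  have hq2h1 : ¬ q2 ≤ h1 := by
    intro hle
    have h5 : q2 ≤ h1 ⊓ ℓ := le_inf hle hq2.2
    rw [hh1.2] at h5
    exact (GL.RA_not_le hq2K hq1K (Ne.symm hne)) h5
  have hq1F : ¬ q1 ≤ F := fun h => hq1h2 (h.trans inf_le_right)
  have hq2F : ¬ q2 ≤ F := fun h => hq2h1 (h.trans inf_le_left)
  have huF : u ≤ F := le_inf hh1.1.1 hh2.1.1
  have hFv : F ≤ v := inf_le_left.trans hh1.1.2.le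
  have huℓ : u ≤ ℓ := hq1.1.le.trans hq1.2
  -- ℓ ⊓ F = u
  have hℓF : ℓ ⊓ F = u := by
    apply le_antisymm
    · have e1 : ℓ ⊓ F ≤ q1 := by
        rw [← hh1.2]
        exact le_inf (inf_le_right.trans inf_le_left) inf_le_left
      have e2 : ℓ ⊓ F ≤ q2 := by
        rw [← hh2.2]
        exact le_inf (inf_le_right.trans inf_le_right) inf_le_left
      have e3 : q1 ⊓ q2 ≤ u := by
        by_contra hcon
        have hlt : u < q1 ⊓ q2 :=
          lt_of_le_of_ne (le_inf hq1.1.le hq2.1.le) (fun h => hcon (h ▸ le_rfl))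
        have hlt2 : q1 ⊓ q2 < q1 := by
          refine lt_of_le_of_ne inf_le_left (fun h => ?_)
          have : q1 ≤ q2 := h ▸ inf_le_right
          exact (GL.RA_not_le hq1K hq2K hne) this
        exact hq1.1.2 hlt hlt2
      exact (le_inf e1 e2).trans e3
    · exact le_inf huℓ huF
  -- v = ℓ ⊔ F
  have hv_eq : ℓ ⊔ F = v := by
    apply le_antisymm (sup_le hℓv hFv)
    have hss := GL.rel_sSup_eq hch hrc hsm hat huv
    rw [← hss]
    apply sup_le (huF.trans le_sup_right)
    apply sSup_le
    intro c hc
    by_cases hcl : c ≤ ℓ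
    · exact le_sup_of_le_left hcl
    · exact le_sup_of_le_right (hoff c hc hcl)
  have hℓq12 : q1 ⊔ q2 = ℓ := GL.line_eq hch hrc hsm hat hq1K hq2K hne hrℓ hq1.2 hq2.2
  have hrh1 : r h1 + 1 = r v := (hrc _ _ hh1.1.2).symm
  have hq1h1 : q1 ≤ h1 := hh1.2 ▸ inf_le_left
  -- rank of F
  have hrF : r F = r u + (n - 2) := by
    have c1 : F ⋖ F ⊔ q1 := GL.rel_covBy_sup hch hrc hsm hat hq1.1 huF hq1F
    have e1 : r (F ⊔ q1) = r F + 1 := hrc _ _ c1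
    have hFq1h1 : F ⊔ q1 ≤ h1 := sup_le inf_le_left hq1h1
    have up : r (F ⊔ q1) ≤ r h1 := GL.rank_le_of_le hch hrc hFq1h1
    have hveq2 : (F ⊔ q1) ⊔ q2 = v := by
      rw [sup_assoc, hℓq12, sup_comm F ℓ, hv_eq]
    have low : r v ≤ r (F ⊔ q1) + 1 := by
      rw [← hveq2]
      exact GL.rank_sup_le hch hrc hsm hat hq2.1 (huF.trans le_sup_left)
    omega
  -- for every point q' of the line, F ⊔ q' is a transversal coatom at q'
  have hqF : ∀ q', q' ∈ GL.RA u ℓ → (F ⊔ q') ∈ GL.RH u v ∧ (F ⊔ q') ⊓ ℓ = q' := by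
    intro q' hq'
    have hq'F : ¬ q' ≤ F := by
      intro hle
      have h5 : q' ≤ ℓ ⊓ F := le_inf hq'.2 hle
      rw [hℓF] at h5
      exact absurd (lt_of_lt_of_le hq'.1.lt h5) (lt_irrefl u)
    have c1 : F ⋖ F ⊔ q' := GL.rel_covBy_sup hch hrc hsm hat hq'.1 huF hq'F
    have e1 : r (F ⊔ q') = r F + 1 := hrc _ _ c1
    have hlev : F ⊔ q' ≤ v := sup_le hFv (hq'.2.trans hℓv)
    have hcov : (F ⊔ q') ⋖ v := GL.covBy_of_rank hch hrc
      (lt_of_le_of_ne hlev (fun h => by rw [h] at e1; omega)) (by omega)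
    have hnℓ : ¬ ℓ ≤ F ⊔ q' := by
      intro hle
      have h5 : v ≤ F ⊔ q' := by rw [← hv_eq]; exact sup_le hle le_sup_left
      have h6 := GL.rank_le_of_le hch hrc h5
      omega
    have hmeet : (F ⊔ q') ⊓ ℓ = q' := by
      have hle1 : q' ≤ (F ⊔ q') ⊓ ℓ := le_inf le_sup_right hq'.2
      have hlt : (F ⊔ q') ⊓ ℓ < ℓ := lt_of_le_of_ne inf_le_right
        (fun h => hnℓ (h ▸ inf_le_left))
      have h7 := GL.rank_lt_of_lt hch hrc hlt
      have hrq' : r q' = r u + 1 := hrc _ _ hq'.1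
      exact (GL.eq_of_le_rank hch hrc hle1 (by omega)).symm
    exact ⟨⟨huF.trans le_sup_left, hcov⟩, hmeet⟩
  have hℓne : ∀ q', q' ∈ GL.RA u ℓ → ℓ ≠ F ⊔ q' := by
    intro q' hq' h
    have h5 := (hqF q' hq').2
    rw [← h, inf_idem] at h5
    have h6 := hrc _ _ hq'.1
    rw [← h5] at h6
    omega
  rcases Nat.lt_or_ge n 4 with hlt4 | hge4
  · -- n = 3
    have hrF3 : r F = r u + 1 := by omega
    have hFK : F ∈ GL.RA u v :=
      ⟨GL.covBy_of_rank hch hrc (lt_of_le_of_ne huF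
        (fun h => by rw [← h] at hrF3; omega)) hrF3, hFv⟩
    have hOF : ∀ c, c ∈ GL.RA u v → ¬ c ≤ ℓ → c = F := by
      intro c hc hcl
      refine GL.eq_of_le_rank hch hrc (hoff c hc hcl) ?_
      rw [hrF3, GL.rank_RA hch hrc hc]
    have hℓRH : ℓ ∈ GL.RH u v := ⟨huℓ, GL.covBy_of_rank hch hrc
      (lt_of_le_of_ne hℓv (fun h => by rw [h] at hrℓ; omega)) (by omega)⟩
    refine ⟨fun a => if ha1 : a.1 = q1 then ⟨ℓ, hℓRH⟩
      else if haℓ : a.1 ≤ ℓ then ⟨F ⊔ a.1, (hqF a.1 ⟨a.2.1, haℓ⟩).1⟩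
      else ⟨F ⊔ q1, (hqF q1 hq1).1⟩, ?_, ?_⟩
    · intro a a' heq
      have hv5 := congrArg Subtype.val heq
      beta_reduce at hv5
      simp only [apply_dite Subtype.val] at hv5
      by_cases ha1 : a.1 = q1 <;> by_cases ha'1 : a'.1 = q1
      · exact Subtype.ext (ha1.trans ha'1.symm)
      · rw [dif_pos ha1, dif_neg ha'1] at hv5
        beta_reduce at hv5
        by_cases ha'ℓ : a'.1 ≤ ℓ
        · rw [dif_pos ha'ℓ] at hv5
          exact absurd hv5 (hℓne a'.1 ⟨a'.2.1, ha'ℓ⟩)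
        · rw [dif_neg ha'ℓ] at hv5
          exact absurd hv5 (hℓne q1 hq1)
      · rw [dif_neg ha1, dif_pos ha'1] at hv5
        beta_reduce at hv5
        by_cases haℓ : a.1 ≤ ℓ
        · rw [dif_pos haℓ] at hv5
          exact absurd hv5.symm (hℓne a.1 ⟨a.2.1, haℓ⟩)
        · rw [dif_neg haℓ] at hv5
          exact absurd hv5.symm (hℓne q1 hq1)
      · rw [dif_neg ha1, dif_neg ha'1] at hv5
        beta_reduce at hv5
        by_cases haℓ : a.1 ≤ ℓ <;> by_cases ha'ℓ : a'.1 ≤ ℓ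
        · rw [dif_pos haℓ, dif_pos ha'ℓ] at hv5
          apply Subtype.ext
          have e1 := (hqF a.1 ⟨a.2.1, haℓ⟩).2
          have e2 := (hqF a'.1 ⟨a'.2.1, ha'ℓ⟩).2
          rw [← e1, ← e2, hv5]
        · rw [dif_pos haℓ, dif_neg ha'ℓ] at hv5
          have e1 := (hqF a.1 ⟨a.2.1, haℓ⟩).2
          have e2 := (hqF q1 hq1).2
          rw [hv5, e2] at e1
          exact absurd e1.symm ha1
        · rw [dif_neg haℓ, dif_pos ha'ℓ] at hv5
          have e1 := (hqF a'.1 ⟨a'.2.1, ha'ℓ⟩).2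
          have e2 := (hqF q1 hq1).2
          rw [← hv5, e2] at e1
          exact absurd e1.symm ha'1
        · rw [dif_neg haℓ, dif_neg ha'ℓ] at hv5
          apply Subtype.ext
          rw [hOF a.1 a.2 haℓ, hOF a'.1 a'.2 ha'ℓ]
    · intro a
      dsimp only
      split_ifs with ha1 haℓ
      · rw [ha1]; exact hq1.2
      · exact le_sup_right
      · rw [hOF a.1 a.2 haℓ]; exact le_sup_left
  · -- n ≥ 4
    obtain ⟨g, hg, hgle⟩ := IH (n - 2) (by omega) (by omega) u F huF (by omega)
    have hOmem : ∀ c, c ∈ GL.RA u v → ¬ c ≤ ℓ → c ∈ GL.RA u F :=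
      fun c hc hcl => ⟨hc.1, hoff c hc hcl⟩
    -- ℓ ⊔ y is a coatom recovering y
    have hy_mem : ∀ y, y ∈ GL.RH u F → (ℓ ⊔ y) ∈ GL.RH u v ∧ (ℓ ⊔ y) ⊓ F = y := by
      intro y hy
      have hyF : y ⋖ F := hy.2
      have hry : r y + 1 = r F := (hrc _ _ hyF).symm
      have hq1y : ¬ q1 ≤ y := fun h => hq1F (h.trans hyF.le)
      have c1 : y ⋖ y ⊔ q1 := GL.rel_covBy_sup hch hrc hsm hat hq1.1 hy.1 hq1y
      have e1 : r (y ⊔ q1) = r y + 1 := hrc _ _ c1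
      have hq2y1 : ¬ q2 ≤ y ⊔ q1 := by
        intro hle
        have hℓle : ℓ ≤ y ⊔ q1 := by
          rw [← hℓq12]; exact sup_le (le_sup_right) hle
        have h5 : v ≤ F ⊔ q1 := by
          rw [← hv_eq]
          exact sup_le (hℓle.trans (sup_le (hyF.le.trans le_sup_left) le_sup_right))
            le_sup_left
        have h6 := GL.rank_le_of_le hch hrc h5
        have c2 : F ⋖ F ⊔ q1 := GL.rel_covBy_sup hch hrc hsm hat hq1.1 huF hq1F
        have e2 : r (F ⊔ q1) = r F + 1 := hrc _ _ c2
        omega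
      have c2 : (y ⊔ q1) ⋖ (y ⊔ q1) ⊔ q2 := GL.rel_covBy_sup hch hrc hsm hat hq2.1
        (hy.1.trans le_sup_left) hq2y1
      have heq2 : (y ⊔ q1) ⊔ q2 = ℓ ⊔ y := by
        rw [sup_assoc, hℓq12]; exact sup_comm y ℓ
      have e3 : r (ℓ ⊔ y) = r y + 2 := by
        rw [← heq2, hrc _ _ c2, e1]
      have hlev : ℓ ⊔ y ≤ v := sup_le hℓv (hyF.le.trans hFv)
      have hcov : (ℓ ⊔ y) ⋖ v := GL.covBy_of_rank hch hrc
        (lt_of_le_of_ne hlev (fun h => by rw [h] at e3; omega)) (by omega)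
      have hnF : ¬ F ≤ ℓ ⊔ y := by
        intro hle
        have h5 : v ≤ ℓ ⊔ y := by rw [← hv_eq]; exact sup_le le_sup_left hle
        have h6 := GL.rank_le_of_le hch hrc h5
        omega
      have hmeet : (ℓ ⊔ y) ⊓ F = y := by
        have hle1 : y ≤ (ℓ ⊔ y) ⊓ F := le_inf le_sup_right hyF.le
        have hlt : (ℓ ⊔ y) ⊓ F < F := lt_of_le_of_ne inf_le_right
          (fun h => hnF (h ▸ inf_le_left))
        have h7 := GL.rank_lt_of_lt hch hrc hlt
        exact (GL.eq_of_le_rank hch hrc hle1 (by omega)).symm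
      exact ⟨⟨hy.1.trans le_sup_right, hcov⟩, hmeet⟩
    have hcross : ∀ q', q' ∈ GL.RA u ℓ → ∀ y, y ∈ GL.RH u F → F ⊔ q' ≠ ℓ ⊔ y := by
      intro q' hq' y hy h
      have e1 := (hqF q' hq').2
      rw [h] at e1
      have e2 : ℓ ≤ ℓ ⊔ y := le_sup_left
      have e3 : (ℓ ⊔ y) ⊓ ℓ = ℓ := inf_eq_right.2 e2
      rw [e3] at e1
      have h6 := hrc _ _ hq'.1
      rw [e1] at hrℓ
      omega
    refine ⟨fun a => if haℓ : a.1 ≤ ℓ then ⟨F ⊔ a.1, (hqF a.1 ⟨a.2.1, haℓ⟩).1⟩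
      else ⟨ℓ ⊔ (g ⟨a.1, hOmem a.1 a.2 haℓ⟩).1,
        (hy_mem _ (g ⟨a.1, hOmem a.1 a.2 haℓ⟩).2).1⟩, ?_, ?_⟩
    · intro a a' heq
      have hv5 := congrArg Subtype.val heq
      beta_reduce at hv5
      simp only [apply_dite Subtype.val] at hv5
      by_cases haℓ : a.1 ≤ ℓ <;> by_cases ha'ℓ : a'.1 ≤ ℓ
      · rw [dif_pos haℓ, dif_pos ha'ℓ] at hv5
        apply Subtype.ext
        have e1 := (hqF a.1 ⟨a.2.1, haℓ⟩).2
        have e2 := (hqF a'.1 ⟨a'.2.1, ha'ℓ⟩).2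
        rw [← e1, ← e2, hv5]
      · rw [dif_pos haℓ, dif_neg ha'ℓ] at hv5
        exact absurd hv5 (hcross a.1 ⟨a.2.1, haℓ⟩ _ (g ⟨a'.1, hOmem a'.1 a'.2 ha'ℓ⟩).2)
      · rw [dif_neg haℓ, dif_pos ha'ℓ] at hv5
        exact absurd hv5.symm (hcross a'.1 ⟨a'.2.1, ha'ℓ⟩ _ (g ⟨a.1, hOmem a.1 a.2 haℓ⟩).2)
      · rw [dif_neg haℓ, dif_neg ha'ℓ] at hv5
        have e1 := (hy_mem _ (g ⟨a.1, hOmem a.1 a.2 haℓ⟩).2).2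
        have e2 := (hy_mem _ (g ⟨a'.1, hOmem a'.1 a'.2 ha'ℓ⟩).2).2
        rw [hv5] at e1
        rw [e2] at e1
        have e4 : g ⟨a.1, hOmem a.1 a.2 haℓ⟩ = g ⟨a'.1, hOmem a'.1 a'.2 ha'ℓ⟩ :=
          Subtype.ext e1.symm
        have e5 := hg e4
        apply Subtype.ext
        have e6 := congrArg Subtype.val e5
        exact e6
    · intro a
      dsimp only
      split_ifs with haℓ
      · exact le_sup_right
      · exact le_trans (hgle ⟨a.1, hOmem a.1 a.2 haℓ⟩) le_sup_right

include hch hrc hsm hat in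
theorem GL.infinite_case {n : ℕ} (hn : 3 ≤ n)
    (IH : ∀ m, 2 ≤ m → m < n → ∀ u' v' : L, u' ≤ v' → r v' = r u' + m → GL.RMatch u' v')
    {u v : L} (huv : u ≤ v) (hrv : r v = r u + n)
    (hreg : (Cardinal.mk (GL.RA u v)).IsRegular)
    (hinf : (GL.RA u v).Infinite) : GL.RMatch u v := by
  classical
  by_cases hbig : ∃ ℓ, ℓ ≤ v ∧ r ℓ = r u + 2 ∧
      Cardinal.mk (GL.RA u v) ≤ Cardinal.mk (GL.RA u ℓ)
  · obtain ⟨ℓ, hℓv, hrℓ, hℓbig⟩ := hbig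
    have hAinf : (GL.RA u ℓ).Infinite := by
      rw [← Set.infinite_coe_iff, Cardinal.infinite_iff]
      exact hreg.aleph0_le.trans hℓbig
    set Sing := {q : L | (GL.T u v ℓ q).Subsingleton} with hSing
    by_cases hsing : (GL.RA u ℓ ∩ Sing).Subsingleton
    · apply GL.sing_le_one_case hch hrc hsm hat hℓv hrℓ hAinf
      have h1 : Cardinal.mk {c | c ∈ GL.RA u v ∧ ¬ c ≤ ℓ} ≤ Cardinal.mk (GL.RA u v) :=
        Cardinal.mk_le_mk_of_subset (fun c hc => hc.1)
      have h2 : Cardinal.mk (GL.RA u v) ≤ Cardinal.mk (GL.RA u ℓ \ Sing : Set L) := by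
        have e1 : Cardinal.mk (GL.RA u ℓ \ (GL.RA u ℓ ∩ Sing) : Set L) +
            Cardinal.mk (GL.RA u ℓ ∩ Sing : Set L) = Cardinal.mk (GL.RA u ℓ) :=
          Cardinal.mk_diff_add_mk Set.inter_subset_left
        have e2 : (GL.RA u ℓ \ (GL.RA u ℓ ∩ Sing) : Set L) = GL.RA u ℓ \ Sing := by
          ext x
          simp only [Set.mem_diff, Set.mem_inter_iff]
          tauto
        have e3 : Cardinal.mk (GL.RA u ℓ ∩ Sing : Set L) ≤ 1 :=
          Cardinal.mk_le_one_iff_set_subsingleton.2 hsing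
        by_contra hcon
        push_neg at hcon
        have e4 : Cardinal.mk (GL.RA u ℓ) ≤ Cardinal.mk (GL.RA u ℓ \ Sing : Set L) + 1 := by
          rw [← e1, e2]
          exact add_le_add_right e3 _
        have e5 : Cardinal.mk (GL.RA u ℓ \ Sing : Set L) + 1 < Cardinal.mk (GL.RA u v) :=
          Cardinal.add_lt_of_lt hreg.aleph0_le hcon
            (lt_of_lt_of_le Cardinal.one_lt_aleph0 hreg.aleph0_le)
        exact absurd hℓbig (not_le_of_gt (lt_of_le_of_lt e4 e5))
      exact h1.trans h2
    · rw [Set.not_subsingleton_iff] at hsing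
      obtain ⟨q1, hq1m, q2, hq2m, hne⟩ := hsing
      exact GL.sing_ge_two_case hch hrc hsm hat hn IH huv hrv hℓv hrℓ
        hq1m.1 hq2m.1 hne hq1m.2 hq2m.2
  · push_neg at hbig
    have hdeg : ∀ a : GL.RA u v, Cardinal.mk (GL.RA u v) ≤ Cardinal.mk (GL.NH u v a.1) := by
      intro a
      by_contra hcon
      push_neg at hcon
      obtain ⟨ℓ, hℓv, hrℓ, hbigℓ⟩ :=
        GL.exists_big_line hch hrc hsm hat hn hrv IH hreg a.2 hcon
      exact absurd hbigℓ (not_le_of_gt (hbig ℓ hℓv hrℓ))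
    obtain ⟨f, hfinj, hfmem⟩ := GL.greedy (GL.RA u v) (fun a => GL.NH u v a) hdeg
    exact ⟨fun a => ⟨f a, (hfmem a).1⟩,
      fun a b hab => hfinj (congrArg Subtype.val hab), fun a => (hfmem a).2⟩

include hch hrc hsm hat in
theorem GL.exists_relatom_not_le {u x y : L} (hux : u ≤ x) (huy : u ≤ y) (hnxy : ¬ x ≤ y) :
    ∃ c, u ⋖ c ∧ c ≤ x ∧ ¬ c ≤ y := by
  by_contra hcon
  push_neg at hcon
  apply hnxy
  have h1 := GL.rel_sSup_eq hch hrc hsm hat hux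
  rw [← h1]
  exact sup_le huy (sSup_le fun c hc => hcon c hc.1 hc.2)

include hch hrc hsm hat in
theorem GL.RH_finite {u v : L} (huv : u ≤ v) (hfin : (GL.RA u v).Finite) :
    (GL.RH u v).Finite := by
  classical
  have key : ∀ x, u ≤ x → x ≤ v → u ⊔ sSup {a | a ∈ GL.RA u v ∧ a ≤ x} = x := by
    intro x hux hxv
    have h1 := GL.rel_sSup_eq hch hrc hsm hat hux
    have h2 : {c | u ⋖ c ∧ c ≤ x} = {a | a ∈ GL.RA u v ∧ a ≤ x} := by
      ext c
      exact ⟨fun ⟨h3, h4⟩ => ⟨⟨h3, h4.trans hxv⟩, h4⟩, fun ⟨h3, h4⟩ => ⟨h3.1, h4⟩⟩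
    rw [← h2]
    exact h1
  apply Set.Finite.of_finite_image (f := fun h => {a | a ∈ GL.RA u v ∧ a ≤ h})
  · apply Set.Finite.subset hfin.finite_subsets
    rintro t ⟨h, hh, rfl⟩
    exact fun a ha => ha.1
  · intro h hh h' hh' heq
    beta_reduce at heq
    have e1 := key h hh.1 hh.2.le
    have e2 := key h' hh'.1 hh'.2.le
    rw [← e1, ← e2, heq]

open scoped Classical in
include hch hrc hsm hat in
set_option maxHeartbeats 1000000 in
theorem GL.spanning_hall {k : ℕ} (hk : 3 ≤ k)
    (IH : ∀ m, 2 ≤ m → m < k → ∀ u' v' : L, u' ≤ v' → r v' = r u' + m → GL.RMatch u' v')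
    {u v : L} (huv : u ≤ v) (hrv : r v = r u + k)
    (hfinRH : (GL.RH u v).Finite)
    (S : Finset L) (hS2 : 2 ≤ S.card) (hSsub : ↑S ⊆ GL.RA u v)
    (hspan : u ⊔ S.sup id = v) :
    S.card ≤ (hfinRH.toFinset.filter (fun h => ∃ p ∈ S, p ≤ h)).card := by
  classical
  set NS := hfinRH.toFinset.filter (fun h => ∃ p ∈ S, p ≤ h) with hNS
  set m := S.card with hm
  set w := NS.card with hw
  by_contra hcon
  push_neg at hcon
  have hNSmem : ∀ h ∈ NS, h ∈ GL.RH u v ∧ ∃ p ∈ S, p ≤ h := by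
    intro h hh
    rw [hNS, Finset.mem_filter, Set.Finite.mem_toFinset] at hh
    exact hh
  have hmemNS : ∀ h, h ∈ GL.RH u v → (∃ p ∈ S, p ≤ h) → h ∈ NS := by
    intro h h1 h2
    rw [hNS, Finset.mem_filter, Set.Finite.mem_toFinset]
    exact ⟨h1, h2⟩
  have hs1 : ∀ h ∈ NS, ∃ p ∈ S, ¬ p ≤ h := by
    intro h hh
    by_contra hc
    push_neg at hc
    have hvh : v ≤ h := by
      rw [← hspan]
      refine sup_le (hNSmem h hh).1.1 (Finset.sup_le fun p hp => hc p hp)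
    exact absurd hvh (not_le_of_gt (hNSmem h hh).1.2.lt)
  have hs2 : ∀ p ∈ S, ∃ h ∈ NS, ¬ p ≤ h := by
    intro p hp
    obtain ⟨q, hq, hqp⟩ := Finset.exists_mem_ne (s := S) (by omega) p
    have hpA := hSsub hp
    have hqA := hSsub hq
    obtain ⟨h, hh1, hh2, hh3⟩ := GL.rel_L2 hch hrc hsm hat hqA.1.le hqA.2 hpA.1 hpA.2
      (GL.RA_not_le hpA hqA (fun he => hqp he.symm))
    exact ⟨h, hmemNS h ⟨hqA.1.le.trans hh1, hh2⟩ ⟨q, hq, hh1⟩, hh3⟩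
  have hkey : ∀ p ∈ S, ∀ h ∈ NS, ¬ p ≤ h →
      (S.filter (fun q => q ≤ h)).card ≤ (NS.filter (fun h' => p ≤ h')).card := by
    intro p hp h hh hph
    have hpA := hSsub hp
    have hrp : r p = r u + 1 := hrc _ _ hpA.1
    obtain ⟨fp, hfpinj, hfple⟩ := IH (k - 1) (by omega) (by omega) p v hpA.2 (by omega)
    have hmem : ∀ q, q ∈ S.filter (fun q => q ≤ h) → p ⊔ q ∈ GL.RA p v := by
      intro q hq
      rw [Finset.mem_filter] at hq
      have hqA := hSsub hq.1
      have hqp : q ≠ p := fun he => hph (he ▸ hq.2)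
      exact ⟨GL.rel_covBy_sup hch hrc hsm hat hqA.1 hpA.1.le
        (GL.RA_not_le hqA hpA hqp), sup_le hpA.2 hqA.2⟩
    set f : L → L := fun q => if hq : p ⊔ q ∈ GL.RA p v then (fp ⟨p ⊔ q, hq⟩).1 else ⊥ with hf
    have hfval : ∀ q (hq : p ⊔ q ∈ GL.RA p v), f q = (fp ⟨p ⊔ q, hq⟩).1 := by
      intro q hq
      rw [hf]
      exact dif_pos hq
    apply Finset.card_le_card_of_injOn f
    · intro q hq
      have hq' := hmem q hq
      rw [Finset.mem_coe, Finset.mem_filter]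
      rw [hfval q hq']
      constructor
      · refine hmemNS _ ⟨hpA.1.le.trans (fp ⟨p ⊔ q, hq'⟩).2.1, (fp ⟨p ⊔ q, hq'⟩).2.2⟩
          ⟨p, hp, (fp ⟨p ⊔ q, hq'⟩).2.1⟩
      · exact (fp ⟨p ⊔ q, hq'⟩).2.1
    · intro q hq q' hq' heq
      have hqm := Finset.mem_coe.1 hq
      have hq'm := Finset.mem_coe.1 hq'
      have h1 := hmem q hqm
      have h2 := hmem q' hq'm
      rw [hfval q h1, hfval q' h2] at heq
      have h3 : fp ⟨p ⊔ q, h1⟩ = fp ⟨p ⊔ q', h2⟩ := Subtype.ext heq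
      have h4 : p ⊔ q = p ⊔ q' := congrArg Subtype.val (hfpinj h3)
      by_contra hne
      rw [Finset.mem_filter] at hqm hq'm
      have hqA := hSsub hqm.1
      have hq'A := hSsub hq'm.1
      have hline : r (q ⊔ q') = r u + 2 := GL.line_rank hch hrc hsm hat hqA hq'A hne
      have h5 : q ⊔ q' ≤ (p ⊔ q) ⊓ h := by
        refine le_inf (sup_le le_sup_right ?_) (sup_le hqm.2 hq'm.2)
        rw [h4]
        exact le_sup_right
      have h6 : (p ⊔ q) ⊓ h < p ⊔ q := by
        refine lt_of_le_of_ne inf_le_left (fun he => hph ?_)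
        have : p ⊔ q ≤ h := by rw [← he]; exact inf_le_right
        exact le_sup_left.trans this
      have h7 : r (p ⊔ q) = r u + 2 := by
        have := hrc _ _ h1.1
        omega
      have h8 := GL.rank_lt_of_lt hch hrc h6
      have h9 := GL.rank_le_of_le hch hrc h5
      omega
  -- positivity facts
  have hdeglt : ∀ p ∈ S, (NS.filter (fun h' => p ≤ h')).card < w := by
    intro p hp
    obtain ⟨h, hh, hph⟩ := hs2 p hp
    apply Finset.card_lt_card
    refine ⟨Finset.filter_subset _ _, fun hsub => ?_⟩
    have := hsub hh
    rw [Finset.mem_filter] at this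
    exact hph this.2
  have hptspos : ∀ h ∈ NS, 0 < (S.filter (fun q => q ≤ h)).card := by
    intro h hh
    obtain ⟨p, hp, hph⟩ := (hNSmem h hh).2
    exact Finset.card_pos.2 ⟨p, Finset.mem_filter.2 ⟨hp, hph⟩⟩
  have hptslt : ∀ h ∈ NS, (S.filter (fun q => q ≤ h)).card < m := by
    intro h hh
    obtain ⟨p, hp, hph⟩ := hs1 h hh
    apply Finset.card_lt_card
    refine ⟨Finset.filter_subset _ _, fun hsub => ?_⟩
    have := hsub hp
    rw [Finset.mem_filter] at this
    exact hph this.2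
  have hm0 : (0 : ℚ) < (m : ℚ) := by
    have : 0 < m := by omega
    exact_mod_cast this
  have hw0 : 0 < w := by
    obtain ⟨p, hp⟩ := Finset.card_pos.1 (show 0 < S.card by omega)
    obtain ⟨h, hh, _⟩ := hs2 p hp
    exact Finset.card_pos.2 ⟨h, hh⟩
  -- the two sums
  have hA : (∑ pr ∈ S ×ˢ NS, if pr.1 ≤ pr.2 then (0 : ℚ)
      else 1 / (m * (w - (NS.filter (fun h' => pr.1 ≤ h')).card))) = 1 := by
    rw [Finset.sum_product]
    have hinner : ∀ p ∈ S, (∑ h ∈ NS, if p ≤ h then (0 : ℚ)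
        else 1 / (m * (w - (NS.filter (fun h' => p ≤ h')).card))) = 1 / m := by
      intro p hp
      rw [Finset.sum_ite, Finset.sum_const, Finset.sum_const]
      have hcnt : (NS.filter (fun h => ¬ p ≤ h)).card
          = w - (NS.filter (fun h' => p ≤ h')).card := by
        have h10 := Finset.card_filter_add_card_filter_not
          (s := NS) (p := fun h => p ≤ h)
        omega
      rw [hcnt]
      have h1 : (NS.filter (fun h' => p ≤ h')).card < w := hdeglt p hp
      rw [smul_zero, zero_add, nsmul_eq_mul, Nat.cast_sub h1.le]
      have hne2 : ((w : ℚ) - (NS.filter (fun h' => p ≤ h')).card) ≠ 0 := by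
        have hlt : (((NS.filter (fun h' => p ≤ h')).card : ℚ)) < (w : ℚ) := by
          exact_mod_cast h1
        linarith
      field_simp
    rw [Finset.sum_congr rfl hinner, Finset.sum_const, nsmul_eq_mul, ← hm,
      mul_one_div, div_self (ne_of_gt hm0)]
  have hB : (∑ pr ∈ S ×ˢ NS, if pr.1 ≤ pr.2 then (0 : ℚ)
      else 1 / (w * (m - (S.filter (fun q => q ≤ pr.2)).card))) = 1 := by
    have hwq : (0 : ℚ) < (w : ℚ) := by exact_mod_cast hw0
    rw [Finset.sum_product_right]
    have hinner : ∀ h ∈ NS, (∑ p ∈ S, if p ≤ h then (0 : ℚ)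
        else 1 / (w * (m - (S.filter (fun q => q ≤ h)).card))) = 1 / w := by
      intro h hh
      rw [Finset.sum_ite, Finset.sum_const, Finset.sum_const]
      have hcnt : (S.filter (fun p => ¬ p ≤ h)).card
          = m - (S.filter (fun q => q ≤ h)).card := by
        have h10 := Finset.card_filter_add_card_filter_not
          (s := S) (p := fun q => q ≤ h)
        omega
      rw [hcnt]
      have h1 : (S.filter (fun q => q ≤ h)).card < m := hptslt h hh
      rw [smul_zero, zero_add, nsmul_eq_mul, Nat.cast_sub h1.le]
      have hne2 : ((m : ℚ) - (S.filter (fun q => q ≤ h)).card) ≠ 0 := by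
        have hlt : (((S.filter (fun q => q ≤ h)).card : ℚ)) < (m : ℚ) := by
          exact_mod_cast h1
        linarith
      field_simp
    rw [Finset.sum_congr rfl hinner, Finset.sum_const, nsmul_eq_mul, ← hw,
      mul_one_div, div_self (ne_of_gt hwq)]
  have hstrict : ∀ p h, p ∈ S → h ∈ NS → ¬ p ≤ h →
      1 / ((w : ℚ) * (m - (S.filter (fun q => q ≤ h)).card))
        < 1 / ((m : ℚ) * (w - (NS.filter (fun h' => p ≤ h')).card)) := by
    intro p h hp hh hph
    have hkk := hkey p hp h hh hph
    have h1 := hdeglt p hp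
    have h2 := hptslt h hh
    have h3 := hptspos h hh
    have c1 : ((S.filter (fun q => q ≤ h)).card : ℚ)
        ≤ ((NS.filter (fun h' => p ≤ h')).card : ℚ) := by exact_mod_cast hkk
    have c2 : (w : ℚ) < (m : ℚ) := by exact_mod_cast hcon
    have c3 : (1 : ℚ) ≤ ((S.filter (fun q => q ≤ h)).card : ℚ) := by exact_mod_cast h3
    have c4 : (((NS.filter (fun h' => p ≤ h')).card : ℚ)) < (w : ℚ) := by exact_mod_cast h1
    have c5 : (((S.filter (fun q => q ≤ h)).card : ℚ)) < (m : ℚ) := by exact_mod_cast h2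
    clear hph hkk h1 h2 h3
    apply one_div_lt_one_div_of_lt
    · nlinarith
    · nlinarith
  have hlt : (∑ pr ∈ S ×ˢ NS, if pr.1 ≤ pr.2 then (0 : ℚ)
      else 1 / (w * (m - (S.filter (fun q => q ≤ pr.2)).card)))
      < ∑ pr ∈ S ×ˢ NS, if pr.1 ≤ pr.2 then (0 : ℚ)
      else 1 / (m * (w - (NS.filter (fun h' => pr.1 ≤ h')).card)) := by
    apply Finset.sum_lt_sum
    · intro pr hpr
      rw [Finset.mem_product] at hpr
      by_cases hle : pr.1 ≤ pr.2
      · rw [if_pos hle, if_pos hle]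
      · rw [if_neg hle, if_neg hle]
        exact le_of_lt (hstrict pr.1 pr.2 hpr.1 hpr.2 hle)
    · obtain ⟨p0, hp0⟩ := Finset.card_pos.1 (show 0 < S.card by omega)
      obtain ⟨h0, hh0, hp0h0⟩ := hs2 p0 hp0
      refine ⟨(p0, h0), Finset.mem_product.2 ⟨hp0, hh0⟩, ?_⟩
      rw [if_neg hp0h0, if_neg hp0h0]
      exact hstrict p0 h0 hp0 hh0 hp0h0
  rw [hA, hB] at hlt
  exact absurd hlt (lt_irrefl 1)

open scoped Classical in
include hch hrc hsm hat in
theorem GL.finhall : ∀ k : ℕ, 2 ≤ k →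
    (∀ m, 2 ≤ m → m < k → ∀ u' v' : L, u' ≤ v' → r v' = r u' + m → GL.RMatch u' v') →
    ∀ u v : L, u ≤ v → r v = r u + k → (GL.RA u v).Finite →
    ∀ hfinRH : (GL.RH u v).Finite,
    ∀ S : Finset L, S.Nonempty → ↑S ⊆ GL.RA u v →
    S.card ≤ (hfinRH.toFinset.filter (fun h => ∃ p ∈ S, p ≤ h)).card := by
  intro k
  induction k using Nat.strong_induction_on with
  | _ k IHk =>
  intro hk2 IH u v huv hrv hfinRA hfinRH S hSne hSsub
  set NS := hfinRH.toFinset.filter (fun h => ∃ p ∈ S, p ≤ h) with hNS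
  have hmemNS : ∀ h, h ∈ GL.RH u v → (∃ p ∈ S, p ≤ h) → h ∈ NS := by
    intro h h1 h2
    rw [hNS, Finset.mem_filter, Set.Finite.mem_toFinset]
    exact ⟨h1, h2⟩
  have htriv : ∀ p ∈ S, ∃ h, h ∈ NS ∧ p ≤ h := by
    intro p hp
    have hpA := hSsub hp
    have hrp : r p = r u + 1 := hrc _ _ hpA.1
    have hplt : p < v := lt_of_le_of_ne hpA.2 (fun he => by rw [he] at hrp; omega)
    obtain ⟨h, hph, hhv⟩ := GL.rel_coatom_above hch hrc hsm hat hpA.1.le hplt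
    exact ⟨h, hmemNS h ⟨hpA.1.le.trans hph, hhv⟩ ⟨p, hp, hph⟩, hph⟩
  by_cases hcard1 : S.card ≤ 1
  · obtain ⟨p, hp⟩ := hSne
    obtain ⟨h, hh, -⟩ := htriv p hp
    have : 0 < NS.card := Finset.card_pos.2 ⟨h, hh⟩
    omega
  push_neg at hcard1
  have hcard2 : 2 ≤ S.card := hcard1
  set x := u ⊔ S.sup id with hx
  have hux : u ≤ x := le_sup_left
  have hxv : x ≤ v := sup_le huv (Finset.sup_le fun p hp => (hSsub hp).2)
  have hpx : ∀ p ∈ S, p ≤ x := fun p hp =>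
    le_sup_of_le_right (Finset.le_sup (f := id) hp)
  rcases eq_or_lt_of_le hxv with heq | hlt
  · rcases (by omega : k = 2 ∨ 3 ≤ k) with hk2' | hk3
    · apply Finset.card_le_card
      intro p hp
      have hpA := hSsub hp
      have hrp : r p = r u + 1 := hrc _ _ hpA.1
      have hpRH : p ∈ GL.RH u v := ⟨hpA.1.le, GL.covBy_of_rank hch hrc
        (lt_of_le_of_ne hpA.2 (fun he => by rw [he] at hrp; omega)) (by omega)⟩
      exact hmemNS p hpRH ⟨p, hp, le_rfl⟩
    · exact GL.spanning_hall hch hrc hsm hat hk3 IH huv hrv hfinRH S hcard2 hSsub heq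
  · have hrxle : r u ≤ r x := GL.rank_le_of_le hch hrc hux
    set k' := r x - r u with hk'
    have hrxe : r x = r u + k' := by omega
    have hk'lt : k' < k := by
      have := GL.rank_lt_of_lt hch hrc hlt
      omega
    have hk'1 : 1 ≤ k' := by
      obtain ⟨p, hp⟩ := hSne
      have h1 := GL.rank_le_of_le hch hrc (hpx p hp)
      have h2 := hrc _ _ (hSsub hp).1
      omega
    rcases (by omega : k' = 1 ∨ 2 ≤ k') with hk'1e | hk'2
    · exfalso
      obtain ⟨p, hp, q, hq, hne⟩ := Finset.one_lt_card.1 hcard1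
      have hpe : p = x := GL.eq_of_le_rank hch hrc (hpx p hp)
        (by have := hrc _ _ (hSsub hp).1; omega)
      have hqe : q = x := GL.eq_of_le_rank hch hrc (hpx q hq)
        (by have := hrc _ _ (hSsub hq).1; omega)
      exact hne (hpe.trans hqe.symm)
    · have hSsubx : ↑S ⊆ GL.RA u x := fun p hp => ⟨(hSsub hp).1, hpx p hp⟩
      have hfinRAx : (GL.RA u x).Finite :=
        hfinRA.subset (fun a ha => ⟨ha.1, ha.2.trans hxv⟩)
      have hfinRHx : (GL.RH u x).Finite := GL.RH_finite hch hrc hsm hat hux hfinRAx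
      have hrec := IHk k' hk'lt hk'2 (fun m hm2 hmk => IH m hm2 (by omega))
        u x hux hrxe hfinRAx hfinRHx S hSne hSsubx
      set NS' := hfinRHx.toFinset.filter (fun h => ∃ p ∈ S, p ≤ h) with hNS'
      have hNS'mem : ∀ y ∈ NS', y ∈ GL.RH u x ∧ ∃ p ∈ S, p ≤ y := by
        intro y hy
        rw [hNS', Finset.mem_filter, Set.Finite.mem_toFinset] at hy
        exact hy
      have hext : ∀ y, y ∈ GL.RH u x → ∃ h, h ∈ GL.RH u v ∧ y ≤ h ∧ h ⊓ x = y := by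
        intro y hy
        obtain ⟨c, hc1, hc2, hc3⟩ := GL.exists_relatom_not_le hch hrc hsm hat hux hy.1
          (not_le_of_gt hy.2.lt)
        obtain ⟨h, hh1, hh2, hh3⟩ := GL.rel_L2 hch hrc hsm hat hy.1
          (hy.2.le.trans hlt.le) hc1 (hc2.trans hlt.le) hc3
        refine ⟨h, ⟨hy.1.trans hh1, hh2⟩, hh1, ?_⟩
        apply le_antisymm
        · by_contra hcon
          have h5 : y < h ⊓ x := lt_of_le_of_ne (le_inf hh1 hy.2.le)
            (fun he => hcon (he ▸ le_rfl))
          have h6 : h ⊓ x < x := lt_of_le_of_ne inf_le_right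
            (fun he => hh3 (hc2.trans (he ▸ inf_le_left)))
          exact hy.2.2 h5 h6
        · exact le_inf hh1 hy.2.le
      set f : L → L := fun y => if hy : y ∈ GL.RH u x then (hext y hy).choose else ⊥
        with hf
      have hfval : ∀ y (hy : y ∈ GL.RH u x),
          f y ∈ GL.RH u v ∧ y ≤ f y ∧ (f y) ⊓ x = y := by
        intro y hy
        have : f y = (hext y hy).choose := by rw [hf]; exact dif_pos hy
        rw [this]
        exact (hext y hy).choose_spec
      have hcard : NS'.card ≤ NS.card := by
        apply Finset.card_le_card_of_injOn f
        · intro y hy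
          have h1 := hNS'mem y hy
          obtain ⟨p, hp, hpy⟩ := h1.2
          have h2 := hfval y h1.1
          exact hmemNS _ h2.1 ⟨p, hp, hpy.trans h2.2.1⟩
        · intro y hy y' hy' heq
          have h1 := (hNS'mem y (Finset.mem_coe.1 hy)).1
          have h2 := (hNS'mem y' (Finset.mem_coe.1 hy')).1
          have e1 := (hfval y h1).2.2
          have e2 := (hfval y' h2).2.2
          rw [← e1, ← e2, heq]
      exact hrec.trans hcard

open scoped Classical in
include hch hrc hsm hat in
theorem GL.finite_case {n : ℕ} (hn : 2 ≤ n)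
    (IH : ∀ m, 2 ≤ m → m < n → ∀ u' v' : L, u' ≤ v' → r v' = r u' + m → GL.RMatch u' v')
    {u v : L} (huv : u ≤ v) (hrv : r v = r u + n)
    (hfinRA : (GL.RA u v).Finite) : GL.RMatch u v := by
  classical
  have hfinRH := GL.RH_finite hch hrc hsm hat huv hfinRA
  set t : GL.RA u v → Finset L := fun a => hfinRH.toFinset.filter (fun h => a.1 ≤ h) with ht
  have hmemt : ∀ (a : GL.RA u v) (h : L), h ∈ t a ↔ h ∈ GL.RH u v ∧ a.1 ≤ h := by
    intro a h
    rw [ht]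
    simp only [Finset.mem_filter, Set.Finite.mem_toFinset]
  have hall : ∀ s : Finset (GL.RA u v), s.card ≤ (s.biUnion t).card := by
    intro s
    rcases s.eq_empty_or_nonempty with rfl | hne
    · simp
    · set S : Finset L := s.image Subtype.val with hS
      have hScard : S.card = s.card := Finset.card_image_of_injective _ Subtype.val_injective
      have hSsub : ↑S ⊆ GL.RA u v := by
        intro p hp
        rw [hS] at hp
        simp only [Finset.coe_image, Set.mem_image, Finset.mem_coe] at hp
        obtain ⟨a, _, rfl⟩ := hp
        exact a.2
      have hSne : S.Nonempty := hne.image _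
      have hh := GL.finhall hch hrc hsm hat n hn IH u v huv hrv hfinRA hfinRH S hSne hSsub
      have heq : hfinRH.toFinset.filter (fun h => ∃ p ∈ S, p ≤ h) = s.biUnion t := by
        ext h
        simp only [Finset.mem_filter, Finset.mem_biUnion, Set.Finite.mem_toFinset]
        constructor
        · rintro ⟨h1, p, hp, hph⟩
          rw [hS] at hp
          simp only [Finset.mem_image] at hp
          obtain ⟨a, ha, rfl⟩ := hp
          exact ⟨a, ha, (hmemt a h).2 ⟨h1, hph⟩⟩
        · rintro ⟨a, ha, hmem⟩
          rw [hmemt a h] at hmem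
          refine ⟨hmem.1, a.1, ?_, hmem.2⟩
          rw [hS]
          simp only [Finset.mem_image]
          exact ⟨a, ha, rfl⟩
      rw [← heq, ← hScard]
      exact hh
  obtain ⟨f, hfinj, hfm⟩ := (Finset.all_card_le_biUnion_card_iff_exists_injective t).1 hall
  refine ⟨fun a => ⟨f a, ((hmemt a (f a)).1 (hfm a)).1⟩, ?_, ?_⟩
  · intro a b hab
    exact hfinj (congrArg Subtype.val hab)
  · intro a
    exact ((hmemt a (f a)).1 (hfm a)).2

include hch hrc hsm hat in
theorem GL.main (hcard : Cardinal.mk L < Cardinal.aleph Ordinal.omega0) :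
    ∀ n : ℕ, 2 ≤ n → ∀ u v : L, u ≤ v → r v = r u + n → GL.RMatch u v := by
  intro n
  induction n using Nat.strong_induction_on with
  | _ n IHn =>
  intro hn2 u v huv hrv
  have IH : ∀ m, 2 ≤ m → m < n → ∀ u' v' : L, u' ≤ v' → r v' = r u' + m →
      GL.RMatch u' v' := fun m hm2 hmn => IHn m hmn hm2
  rcases (by omega : n = 2 ∨ 3 ≤ n) with rfl | hn3
  · exact GL.base2 hch hrc huv hrv
  · by_cases hfin : (GL.RA u v).Finite
    · exact GL.finite_case hch hrc hsm hat (by omega) IH huv hrv hfin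
    · have hinf : (GL.RA u v).Infinite := hfin
      have haleph0 : Cardinal.aleph0 ≤ Cardinal.mk (GL.RA u v) := by
        haveI := Set.infinite_coe_iff.2 hinf
        exact Cardinal.aleph0_le_mk _
      have hlt : Cardinal.mk (GL.RA u v) < Cardinal.aleph Ordinal.omega0 :=
        lt_of_le_of_lt (Cardinal.mk_set_le _) hcard
      have hreg := GL.regular_of_lt_aleph_omega haleph0 hlt
      exact GL.infinite_case hch hrc hsm hat hn3 IH huv hrv hreg hinf

end Main


/-- Every geometric lattice of finite rank at least 2 whose cardinality is less than
`ℵ_ω` has a matching. -/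
theorem small_cardinality_geometric_lattice_matching (L : Type u) [CompleteLattice L]
    (hL : IsGeomLatFH L) (r : L → ℕ) (hr : IsRankFn r) (hrank : 2 ≤ r ⊤)
    (hcard : Cardinal.mk L < Cardinal.aleph Ordinal.omega0) :
    HasMatching L := by
  obtain ⟨-, -, hch, hsm, hat⟩ := hL
  obtain ⟨hr0, hrc⟩ := hr
  have h1 : r ⊤ = r ⊥ + r ⊤ := by rw [hr0, Nat.zero_add]
  obtain ⟨f, hfinj, hfle⟩ := GL.main hch hrc hsm hat hcard (r ⊤) hrank ⊥ ⊤ bot_le h1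
  have hA : ∀ a : L, IsAtom a → a ∈ GL.RA ⊥ ⊤ :=
    fun a ha => ⟨bot_covBy_iff.2 ha, le_top⟩
  refine ⟨fun a => ⟨(f ⟨a.1, hA a.1 a.2⟩).1, covBy_top_iff.1 (f ⟨a.1, hA a.1 a.2⟩).2.2⟩,
    ?_, ?_⟩
  · intro a b hab
    have h2 := congrArg Subtype.val hab
    beta_reduce at h2
    have h3 := hfinj (Subtype.ext h2)
    apply Subtype.ext
    have h4 := congrArg Subtype.val h3
    exact h4
  · intro a
    exact hfle ⟨a.1, hA a.1 a.2⟩
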